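/- arXiv:2409.06168 — 4 statements merged into one kernel-verified Lean document; each statement's English description precedes it below -/
import Mathlib

section
/- Let Q, R : ℤ × ℝ → ℂ be differentiable in the second (time) variable. For z ∈ ℂ \ {0} define the 2×2 matrices M(n,t,z) = [[z, Q(n,t)], [R(n,t), z⁻¹]] and N(n,t,z) = (1/2)·[[z² − z⁻² − 2Q(n,t)R(n−1,t), 2Q(n,t)z + 2Q(n−1,t)z⁻¹], [2R(n−1,t)z + 2R(n,t)z⁻¹, z⁻² − z² − 2R(n,t)Q(n−1,t)]]. Then the zero-curvature (compatibility) equation ∂ₜM(n,t,z) = N(n+1,t,z)·M(n,t,z) − M(n,t,z)·N(n,t,z) holds for all n ∈ ℤ, t ∈ ℝ and all z ∈ ℂ \ {0} if and only if (Q,R) solves the coupled semi-discrete mKdV system ∂ₜQ(n,t) = (1 − Q(n,t)R(n,t))(Q(n+1,t) − Q(n−1,t)) and ∂ₜR(n,t) = (1 − Q(n,t)R(n,t))(R(n+1,t) − R(n−1,t)). -/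
open Matrix

/-- The Ablowitz–Ladik spectral matrix `M(n,t,z)`. -/
noncomputable def ALMat (Q R : ℤ × ℝ → ℂ) (n : ℤ) (t : ℝ) (z : ℂ) : Matrix (Fin 2) (Fin 2) ℂ :=
  !![z, Q (n, t); R (n, t), z⁻¹]

/-- The time-evolution matrix `N(n,t,z)` of the Ablowitz–Ladik system. -/
noncomputable def ALTimeMat (Q R : ℤ × ℝ → ℂ) (n : ℤ) (t : ℝ) (z : ℂ) :
    Matrix (Fin 2) (Fin 2) ℂ :=
  (1 / 2 : ℂ) •
    !![z ^ 2 - z⁻¹ ^ 2 - 2 * Q (n, t) * R (n - 1, t),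
        2 * Q (n, t) * z + 2 * Q (n - 1, t) * z⁻¹;
      2 * R (n - 1, t) * z + 2 * R (n, t) * z⁻¹,
        z⁻¹ ^ 2 - z ^ 2 - 2 * R (n, t) * Q (n - 1, t)]

lemma ALMat01 (Q R : ℤ × ℝ → ℂ) (n : ℤ) (z : ℂ) :
    (fun u => ALMat Q R n u z 0 1) = fun u => Q (n, u) := rfl

lemma ALMat10 (Q R : ℤ × ℝ → ℂ) (n : ℤ) (z : ℂ) :
    (fun u => ALMat Q R n u z 1 0) = fun u => R (n, u) := rfl

lemma ALMat00 (Q R : ℤ × ℝ → ℂ) (n : ℤ) (z : ℂ) :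
    (fun u => ALMat Q R n u z 0 0) = fun _ => z := rfl

lemma ALMat11 (Q R : ℤ × ℝ → ℂ) (n : ℤ) (z : ℂ) :
    (fun u => ALMat Q R n u z 1 1) = fun _ => z⁻¹ := rfl

set_option maxHeartbeats 1000000 in
/-- The zero-curvature (compatibility) equation
`∂ₜM(n,t,z) = N(n+1,t,z)·M(n,t,z) − M(n,t,z)·N(n,t,z)` holds for all `n`, `t` and all
`z ≠ 0` if and only if `(Q, R)` solves the coupled semi-discrete mKdV system. -/
theorem zero_curvature_iff_coupled_sdmkdv (Q R : ℤ × ℝ → ℂ)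
    (hQ : ∀ (n : ℤ) (t : ℝ), DifferentiableAt ℝ (fun u => Q (n, u)) t)
    (hR : ∀ (n : ℤ) (t : ℝ), DifferentiableAt ℝ (fun u => R (n, u)) t) :
    (∀ (n : ℤ) (t : ℝ) (z : ℂ), z ≠ 0 →
        (Matrix.of fun (i j : Fin 2) => deriv (fun u => ALMat Q R n u z i j) t) =
          ALTimeMat Q R (n + 1) t z * ALMat Q R n t z
            - ALMat Q R n t z * ALTimeMat Q R n t z) ↔
      (∀ (n : ℤ) (t : ℝ),
        deriv (fun u => Q (n, u)) t =
            (1 - Q (n, t) * R (n, t)) * (Q (n + 1, t) - Q (n - 1, t)) ∧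
        deriv (fun u => R (n, u)) t =
            (1 - Q (n, t) * R (n, t)) * (R (n + 1, t) - R (n - 1, t))) := by
  constructor
  · intro h n t
    have h1 := h n t 1 one_ne_zero
    have hQd := congrFun (congrFun h1 0) 1
    have hRd := congrFun (congrFun h1 1) 0
    rw [Matrix.of_apply] at hQd hRd
    rw [ALMat01] at hQd
    rw [ALMat10] at hRd
    simp [ALMat, ALTimeMat, Matrix.mul_apply, Fin.sum_univ_two, Matrix.sub_apply,
      Matrix.smul_apply, add_sub_cancel_right] at hQd hRd
    exact ⟨by rw [hQd]; ring, by rw [hRd]; ring⟩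
  · intro h n t z hz
    ext i j
    rw [Matrix.of_apply]
    have hQ1 := (h n t).1
    have hR1 := (h n t).2
    fin_cases i <;> fin_cases j
    · show deriv (fun _ => z) t = _
      rw [deriv_const]
      simp only [ALMat, ALTimeMat, Matrix.mul_apply, Fin.sum_univ_two, Matrix.sub_apply,
        Matrix.smul_apply, Matrix.cons_val_zero, Matrix.cons_val_one, Matrix.head_cons,
        Matrix.of_apply, add_sub_cancel_right, smul_eq_mul, Fin.zero_eta, Fin.mk_one]
      field_simp
      first
        | ring1
        | (simp only [mul_assoc, ← mul_pow, mul_inv_cancel₀ hz, one_pow, mul_one]; ring1)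
        | (rw [eq_div_iff (by simp [hz])]; ring1)
    · show deriv (fun u => Q (n, u)) t = _
      rw [hQ1]
      simp only [ALMat, ALTimeMat, Matrix.mul_apply, Fin.sum_univ_two, Matrix.sub_apply,
        Matrix.smul_apply, Matrix.cons_val_zero, Matrix.cons_val_one, Matrix.head_cons,
        Matrix.of_apply, add_sub_cancel_right, smul_eq_mul, Fin.zero_eta, Fin.mk_one]
      field_simp
      first
        | ring1
        | (simp only [mul_assoc, ← mul_pow, mul_inv_cancel₀ hz, one_pow, mul_one]; ring1)
        | (rw [eq_div_iff (by simp [hz])]; ring1)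
    · show deriv (fun u => R (n, u)) t = _
      rw [hR1]
      simp only [ALMat, ALTimeMat, Matrix.mul_apply, Fin.sum_univ_two, Matrix.sub_apply,
        Matrix.smul_apply, Matrix.cons_val_zero, Matrix.cons_val_one, Matrix.head_cons,
        Matrix.of_apply, add_sub_cancel_right, smul_eq_mul, Fin.zero_eta, Fin.mk_one]
      field_simp
      first
        | ring1
        | (simp only [mul_assoc, ← mul_pow, mul_inv_cancel₀ hz, one_pow, mul_one]; ring1)
        | (rw [eq_div_iff (by simp [hz])]; ring1)
    · show deriv (fun _ => z⁻¹) t = _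
      rw [deriv_const]
      simp only [ALMat, ALTimeMat, Matrix.mul_apply, Fin.sum_univ_two, Matrix.sub_apply,
        Matrix.smul_apply, Matrix.cons_val_zero, Matrix.cons_val_one, Matrix.head_cons,
        Matrix.of_apply, add_sub_cancel_right, smul_eq_mul, Fin.zero_eta, Fin.mk_one]
      field_simp
      simp only [mul_assoc, ← mul_pow, mul_inv_cancel₀ hz, one_pow, mul_one]
      ring
end

section
/- Let a₀, b₀, k, c, d, s, β, η ∈ ℂ with a₀ ≠ 0, β ≠ 0, s² = (e^k − e^{−k})² + 4a₀b₀, β² = 1 − a₀b₀, and η = (1/2)(e^k + e^{−k})·s. Set μ = (e^k + e^{−k} + s)/(2β), ξ₊ = (e^k − e^{−k} − s)/(2a₀) and ξ₋ = (e^{−k} − e^k − s)/(2a₀), and note μ ≠ 0. Define φ, ψ : ℤ × ℝ → ℂ by φ(n,t) = c·μⁿ·e^{ηt} + d·μ^{−n}·e^{−ηt} and ψ(n,t) = −c·ξ₊·μⁿ·e^{ηt} + d·ξ₋·μ^{−n}·e^{−ηt}. Then for all n ∈ ℤ and t ∈ ℝ: (i) φ(n+1,t) = β⁻¹(e^k·φ(n,t)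 + a₀·ψ(n,t)); (ii) ψ(n+1,t) = β⁻¹(b₀·φ(n,t) + e^{−k}·ψ(n,t)); (iii) 2∂ₜφ(n,t) = (e^{2k} − e^{−2k})·φ(n,t) + 2a₀(e^k + e^{−k})·ψ(n,t); (iv) 2∂ₜψ(n,t) = 2b₀(e^k + e^{−k})·φ(n,t) + (e^{−2k} − e^{2k})·ψ(n,t). -/
open Complex

/-- The explicit seed functions `φ(n,t) = c·μⁿe^{ηt} + d·μ⁻ⁿe^{−ηt}`,
`ψ(n,t) = −c·ξ₊·μⁿe^{ηt} + d·ξ₋·μ⁻ⁿe^{−ηt}` solve the scalar Lax system with constant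
nonzero background `(q, r) = (a₀, b₀)`. -/
theorem seed_functions_solve_scalar_system
    (a₀ b₀ k c d s β η μ ξp ξm : ℂ)
    (ha₀ : a₀ ≠ 0) (hβ0 : β ≠ 0)
    (hs : s ^ 2 = (Complex.exp k - Complex.exp (-k)) ^ 2 + 4 * a₀ * b₀)
    (hβ2 : β ^ 2 = 1 - a₀ * b₀)
    (hη : η = (1 / 2) * (Complex.exp k + Complex.exp (-k)) * s)
    (hμ : μ = (Complex.exp k + Complex.exp (-k) + s) / (2 * β))
    (hξp : ξp = (Complex.exp k - Complex.exp (-k) - s) / (2 * a₀))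
    (hξm : ξm = (Complex.exp (-k) - Complex.exp k - s) / (2 * a₀))
    (φ ψ : ℤ × ℝ → ℂ)
    (hφ : ∀ (n : ℤ) (t : ℝ),
        φ (n, t) = c * μ ^ n * Complex.exp (η * t) + d * μ ^ (-n) * Complex.exp (-(η * t)))
    (hψ : ∀ (n : ℤ) (t : ℝ),
        ψ (n, t) = -(c * ξp) * μ ^ n * Complex.exp (η * t)
          + d * ξm * μ ^ (-n) * Complex.exp (-(η * t))) :
    μ ≠ 0 ∧
    (∀ (n : ℤ) (t : ℝ),
        φ (n + 1, t) = β⁻¹ * (Complex.exp k * φ (n, t) + a₀ * ψ (n, t))) ∧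
    (∀ (n : ℤ) (t : ℝ),
        ψ (n + 1, t) = β⁻¹ * (b₀ * φ (n, t) + Complex.exp (-k) * ψ (n, t))) ∧
    (∀ (n : ℤ) (t : ℝ),
        2 * deriv (fun u : ℝ => φ (n, u)) t =
          (Complex.exp (2 * k) - Complex.exp (-(2 * k))) * φ (n, t)
            + 2 * a₀ * (Complex.exp k + Complex.exp (-k)) * ψ (n, t)) ∧
    (∀ (n : ℤ) (t : ℝ),
        2 * deriv (fun u : ℝ => ψ (n, u)) t =
          2 * b₀ * (Complex.exp k + Complex.exp (-k)) * φ (n, t)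
            + (Complex.exp (-(2 * k)) - Complex.exp (2 * k)) * ψ (n, t)) := by
  set E := Complex.exp k with hE
  set E' := Complex.exp (-k) with hE'
  have hEE : E * E' = 1 := by
    rw [hE, hE', ← Complex.exp_add]; simp
  have hX : (E + E' + s) * (E + E' - s) = 4 * β ^ 2 := by
    linear_combination -hs - 4 * hβ2 + 4 * hEE
  have hsum0 : E + E' + s ≠ 0 := by
    intro h
    apply hβ0
    have hb2 : β ^ 2 = 0 := by
      have h4 : (4 : ℂ) * β ^ 2 = 0 := by rw [← hX, h, zero_mul]
      linear_combination h4 / 4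
    exact pow_eq_zero_iff (by norm_num) |>.mp hb2
  have h2β : (2 : ℂ) * β ≠ 0 := mul_ne_zero two_ne_zero hβ0
  have hμ0 : μ ≠ 0 := by rw [hμ]; exact div_ne_zero hsum0 h2β
  have hK1 : 2 * (β * μ) = E + E' + s := by
    rw [hμ]; field_simp
  have hmul : μ * ((E + E' - s) / (2 * β)) = 1 := by
    rw [hμ]; field_simp; linear_combination hX
  have hinv : (E + E' - s) / (2 * β) = μ⁻¹ := eq_inv_of_mul_eq_one_right hmul
  have hK2 : 2 * (β * μ⁻¹) = E + E' - s := by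
    rw [← hinv]; field_simp
  have hP : 2 * a₀ * ξp = E - E' - s := by
    rw [hξp]; field_simp
  have hM : 2 * a₀ * ξm = E' - E - s := by
    rw [hξm]; field_simp
  have hQp : ξp * (E' - E - s) = 2 * b₀ := by
    rw [hξp, div_mul_eq_mul_div, div_eq_iff (mul_ne_zero two_ne_zero ha₀)]
    linear_combination hs
  have hQm : ξm * (E - E' - s) = 2 * b₀ := by
    rw [hξm, div_mul_eq_mul_div, div_eq_iff (mul_ne_zero two_ne_zero ha₀)]
    linear_combination hs
  have hββ : β * β⁻¹ = 1 := mul_inv_cancel₀ hβ0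
  have hexp : ∀ (w : ℂ) (t : ℝ), HasDerivAt (fun u : ℝ => Complex.exp (w * u))
      (w * Complex.exp (w * t)) t := by
    intro w t
    have h : HasDerivAt (fun z : ℂ => Complex.exp (w * z)) (w * Complex.exp (w * t)) (t : ℂ) := by
      simpa [mul_comm, Function.comp_def] using
        (Complex.hasDerivAt_exp (w * t)).comp (t : ℂ) ((hasDerivAt_id (t : ℂ)).const_mul w)
    exact h.comp_ofReal
  have hexp' : ∀ (t : ℝ), HasDerivAt (fun u : ℝ => Complex.exp (-(η * u)))
      (-η * Complex.exp (-(η * t))) t := by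
    intro t
    simpa [neg_mul] using hexp (-η) t
  have hder : ∀ (A B : ℂ) (t : ℝ),
      HasDerivAt (fun u : ℝ => A * Complex.exp (η * u) + B * Complex.exp (-(η * u)))
        (A * (η * Complex.exp (η * t)) + B * (-η * Complex.exp (-(η * t)))) t := by
    intro A B t
    exact ((hexp η t).const_mul A).add ((hexp' t).const_mul B)
  refine ⟨hμ0, ?_, ?_, ?_, ?_⟩
  · intro n t
    rw [hφ (n + 1) t, hφ n t, hψ n t, zpow_add_one₀ hμ0,
      show -(n + 1) = -n + -1 by ring, zpow_add₀ hμ0, zpow_neg_one]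
    linear_combination
      (β⁻¹ * (c * μ ^ n * Complex.exp (η * (t : ℂ))) / 2) * hK1
      + (β⁻¹ * (c * μ ^ n * Complex.exp (η * (t : ℂ))) / 2) * hP
      + (β⁻¹ * (d * μ ^ (-n) * Complex.exp (-(η * (t : ℂ)))) / 2) * hK2
      - (β⁻¹ * (d * μ ^ (-n) * Complex.exp (-(η * (t : ℂ)))) / 2) * hM
      - (μ * (c * μ ^ n * Complex.exp (η * (t : ℂ)))
          + μ⁻¹ * (d * μ ^ (-n) * Complex.exp (-(η * (t : ℂ))))) * hββ
  · intro n t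
    rw [hψ (n + 1) t, hφ n t, hψ n t, zpow_add_one₀ hμ0,
      show -(n + 1) = -n + -1 by ring, zpow_add₀ hμ0, zpow_neg_one]
    linear_combination
      -(β⁻¹ * ξp * (c * μ ^ n * Complex.exp (η * (t : ℂ))) / 2) * hK1
      + (β⁻¹ * (c * μ ^ n * Complex.exp (η * (t : ℂ))) / 2) * hQp
      + (β⁻¹ * ξm * (d * μ ^ (-n) * Complex.exp (-(η * (t : ℂ)))) / 2) * hK2
      + (β⁻¹ * (d * μ ^ (-n) * Complex.exp (-(η * (t : ℂ)))) / 2) * hQm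
      + (ξp * μ * (c * μ ^ n * Complex.exp (η * (t : ℂ)))
          - ξm * μ⁻¹ * (d * μ ^ (-n) * Complex.exp (-(η * (t : ℂ))))) * hββ
  · intro n t
    have hfun : (fun u : ℝ => φ (n, u))
        = fun u : ℝ => c * μ ^ n * Complex.exp (η * u) + d * μ ^ (-n) * Complex.exp (-(η * u)) :=
      funext fun u => hφ n u
    rw [hfun, (hder (c * μ ^ n) (d * μ ^ (-n)) t).deriv, hφ n t, hψ n t,
      show (2 : ℂ) * k = k + k by ring, Complex.exp_add,
      show -(k + k) = -k + -k by ring, Complex.exp_add, ← hE, ← hE']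
    linear_combination
      (2 * (c * μ ^ n * Complex.exp (η * (t : ℂ)))
        - 2 * (d * μ ^ (-n) * Complex.exp (-(η * (t : ℂ))))) * hη
      + (E + E') * (c * μ ^ n * Complex.exp (η * (t : ℂ))) * hP
      - (E + E') * (d * μ ^ (-n) * Complex.exp (-(η * (t : ℂ)))) * hM
  · intro n t
    have hfun : (fun u : ℝ => ψ (n, u))
        = fun u : ℝ => -(c * ξp) * μ ^ n * Complex.exp (η * u)
            + d * ξm * μ ^ (-n) * Complex.exp (-(η * u)) :=
      funext fun u => hψ n u
    have hd := (hder (-(c * ξp) * μ ^ n) (d * ξm * μ ^ (-n)) t).deriv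
    rw [hfun]
    rw [show (fun u : ℝ => -(c * ξp) * μ ^ n * Complex.exp (η * u)
          + d * ξm * μ ^ (-n) * Complex.exp (-(η * u)))
        = fun u : ℝ => -(c * ξp) * μ ^ n * Complex.exp (η * u)
          + d * ξm * μ ^ (-n) * Complex.exp (-(η * u)) from rfl, hd,
       hφ n t, hψ n t,
      show (2 : ℂ) * k = k + k by ring, Complex.exp_add,
      show -(k + k) = -k + -k by ring, Complex.exp_add, ← hE, ← hE']
    linear_combination
      (-2 * ξp * (c * μ ^ n * Complex.exp (η * (t : ℂ)))
        - 2 * ξm * (d * μ ^ (-n) * Complex.exp (-(η * (t : ℂ))))) * hη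
      + (E + E') * (c * μ ^ n * Complex.exp (η * (t : ℂ))) * hQp
      + (E + E') * (d * μ ^ (-n) * Complex.exp (-(η * (t : ℂ)))) * hQm
end

section
/- With the notation and hypotheses of the explicit first-order solution of the focusing sd-mKdV equation — a₀, k₁, c₁, d₁ ∈ ℝ, a₀ ≠ 0, c₁ ≠ 0, d₁ ≠ 0, (e^{k₁} − e^{−k₁})² > 4a₀², s = √((e^{k₁} − e^{−k₁})² − 4a₀²), β = √(1 + a₀²), μ = (e^{k₁} + e^{−k₁} + s)/(2β), η₁ = (1/2)(e^{k₁} + e^{−k₁})s, ξ₊ = (e^{k₁} − e^{−k₁} − s)/(2a₀), ξ₋ = (e^{−k₁} − e^{k₁} − s)/(2a₀), F(n,t) = −β(A₁μ^{2n}e^{2η₁t} + B₁μ^{−2n}e^{−2η₁t} + C₁), G(n,t) = β(A₂μ^{2n}e^{2η₁t} + B₂μ^{−2n}e^{−2η₁t} + C₂), with A₁ = c₁²μ(1 + ξ₊²), A₂ = c₁²μξ₊(e^{k₁} − e^{−k₁}), B₁ = d₁²μ⁻¹(1 + ξ₋²), B₂ = d₁²μ⁻¹ξ₋(e^{−k₁}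 − e^{k₁}), C₁ = 2c₁d₁(μ + μ⁻¹), C₂ = c₁d₁(μ⁻¹e^{−k₁}ξ₋ − μe^{−k₁}ξ₊ − μe^{k₁}ξ₋ + μ⁻¹e^{k₁}ξ₊) — suppose additionally μ > 1. Then for each fixed t ∈ ℝ, the solution Q = G/F lives on the constant nonzero background determined by a₀: the limits lim_{n→+∞} Q(n,t) and lim_{n→−∞} Q(n,t) exist and each limit L satisfies L² = a₀². -/
set_option maxHeartbeats 1000000


open Filter

private lemma my_tendsto_zpow_atTop_atTop {c : ℝ} (hc : 1 < c) :
    Tendsto (fun n : ℤ => c ^ n) atTop atTop := by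
  refine tendsto_atTop_atTop.2 fun b => ?_
  obtain ⟨N, hN⟩ := ((tendsto_pow_atTop_atTop_of_one_lt hc).eventually_ge_atTop b).exists
  refine ⟨(N : ℤ), fun n hn => hN.trans ?_⟩
  rw [← zpow_natCast]
  exact zpow_le_zpow_right₀ hc.le (by exact_mod_cast hn)

private lemma limit_aux {β A B Cc A' B' C' a₀ : ℝ} (hβ : β ≠ 0) (hA' : A' ≠ 0)
    (hkey : A = a₀ * A') {l : Filter ℤ} [l.NeBot] (x : ℤ → ℝ) (hx : Tendsto x l atTop)
    (Q : ℤ → ℝ)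
    (hQ : ∀ n, Q n = β * (A * x n + B * (x n)⁻¹ + Cc)
      / (-β * (A' * x n + B' * (x n)⁻¹ + C'))) :
    Tendsto Q l (nhds (-a₀)) := by
  have hr0 : Tendsto (fun n => (x n)⁻¹) l (nhds 0) := tendsto_inv_atTop_zero.comp hx
  have hpos : ∀ᶠ n in l, 0 < x n := hx.eventually_gt_atTop 0
  set f : ℝ → ℝ := fun y => -(A + Cc * y + B * y ^ 2) / (A' + C' * y + B' * y ^ 2) with hf
  have heq : ∀ᶠ n in l, Q n = f ((x n)⁻¹) := by
    filter_upwards [hpos] with n hxn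
    have hxne : x n ≠ 0 := hxn.ne'
    have hrne : (x n)⁻¹ ≠ 0 := inv_ne_zero hxne
    have hN : (A * x n + B * (x n)⁻¹ + Cc) * (x n)⁻¹
        = A + Cc * (x n)⁻¹ + B * ((x n)⁻¹) ^ 2 := by field_simp; ring
    have hD : (A' * x n + B' * (x n)⁻¹ + C') * (x n)⁻¹
        = A' + C' * (x n)⁻¹ + B' * ((x n)⁻¹) ^ 2 := by field_simp; ring
    rw [hQ n, hf]
    simp only
    rw [← hN, ← hD, neg_div, mul_div_mul_right _ _ hrne,
      show -β * (A' * x n + B' * (x n)⁻¹ + C') = -(β * (A' * x n + B' * (x n)⁻¹ + C')) by ring,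
      div_neg, mul_div_mul_left _ _ hβ]
  have hcont : ContinuousAt f 0 := by
    apply ContinuousAt.div
    · fun_prop
    · fun_prop
    · simpa using hA'
  have hf0 : f 0 = -a₀ := by
    simp [hf, hkey, neg_div, mul_div_assoc, div_self hA']
  have := (hcont.tendsto.comp hr0)
  rw [hf0] at this
  exact this.congr' (by filter_upwards [heq] with n h using h.symm)

/-- Eq. (5.3) of the paper: for fixed `t`, the explicit first-order soliton `Q = G/F`
of the focusing sd-mKdV equation tends, as `n → ±∞`, to a constant background level `L`
with `L² = a₀²`. -/
theorem first_order_soliton_background_limits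
    (a₀ k₁ c₁ d₁ s β μ η₁ ξp ξm A₁ A₂ B₁ B₂ C₁ C₂ : ℝ)
    (ha₀ : a₀ ≠ 0) (hc₁ : c₁ ≠ 0) (hd₁ : d₁ ≠ 0)
    (hcond : (Real.exp k₁ - Real.exp (-k₁)) ^ 2 > 4 * a₀ ^ 2)
    (hs : s = Real.sqrt ((Real.exp k₁ - Real.exp (-k₁)) ^ 2 - 4 * a₀ ^ 2))
    (hβ : β = Real.sqrt (1 + a₀ ^ 2))
    (hμ : μ = (Real.exp k₁ + Real.exp (-k₁) + s) / (2 * β))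
    (hμ1 : μ > 1)
    (hη : η₁ = (1 / 2) * (Real.exp k₁ + Real.exp (-k₁)) * s)
    (hξp : ξp = (Real.exp k₁ - Real.exp (-k₁) - s) / (2 * a₀))
    (hξm : ξm = (Real.exp (-k₁) - Real.exp k₁ - s) / (2 * a₀))
    (hA₁ : A₁ = c₁ ^ 2 * μ * (1 + ξp ^ 2))
    (hA₂ : A₂ = c₁ ^ 2 * μ * ξp * (Real.exp k₁ - Real.exp (-k₁)))
    (hB₁ : B₁ = d₁ ^ 2 * μ⁻¹ * (1 + ξm ^ 2))
    (hB₂ : B₂ = d₁ ^ 2 * μ⁻¹ * ξm * (Real.exp (-k₁) - Real.exp k₁))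
    (hC₁ : C₁ = 2 * c₁ * d₁ * (μ + μ⁻¹))
    (hC₂ : C₂ = c₁ * d₁ * (μ⁻¹ * Real.exp (-k₁) * ξm - μ * Real.exp (-k₁) * ξp
      - μ * Real.exp k₁ * ξm + μ⁻¹ * Real.exp k₁ * ξp))
    (F G : ℤ × ℝ → ℝ)
    (hF : ∀ (n : ℤ) (t : ℝ),
        F (n, t) = -β * (A₁ * μ ^ (2 * n) * Real.exp (2 * η₁ * t)
          + B₁ * μ ^ (-(2 * n)) * Real.exp (-(2 * η₁ * t)) + C₁))
    (hG : ∀ (n : ℤ) (t : ℝ),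
        G (n, t) = β * (A₂ * μ ^ (2 * n) * Real.exp (2 * η₁ * t)
          + B₂ * μ ^ (-(2 * n)) * Real.exp (-(2 * η₁ * t)) + C₂)) :
    ∀ t : ℝ,
      (∃ L : ℝ, Tendsto (fun n : ℤ => G (n, t) / F (n, t)) atTop (nhds L) ∧
        L ^ 2 = a₀ ^ 2) ∧
      (∃ L : ℝ, Tendsto (fun n : ℤ => G (n, t) / F (n, t)) atBot (nhds L) ∧
        L ^ 2 = a₀ ^ 2) := by
  intro t
  have hE2 : (Real.exp k₁ - Real.exp (-k₁)) ^ 2 - 4 * a₀ ^ 2 ≥ 0 := by nlinarith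
  have hs2 : s ^ 2 = (Real.exp k₁ - Real.exp (-k₁)) ^ 2 - 4 * a₀ ^ 2 := by
    rw [hs]; exact Real.sq_sqrt hE2
  have hμ0 : (0 : ℝ) < μ := lt_trans zero_lt_one hμ1
  have hμne : μ ≠ 0 := hμ0.ne'
  have hβ0 : (0 : ℝ) < β := by
    rw [hβ]; exact Real.sqrt_pos.2 (by positivity)
  have hβne : β ≠ 0 := hβ0.ne'
  -- key algebraic identities
  have hk1 : ξp * (Real.exp k₁ - Real.exp (-k₁)) = a₀ * (1 + ξp ^ 2) := by
    rw [hξp]; field_simp; linear_combination (-1 : ℝ) * hs2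
  have hk2 : ξm * (Real.exp (-k₁) - Real.exp k₁) = a₀ * (1 + ξm ^ 2) := by
    rw [hξm]; field_simp; linear_combination (-1 : ℝ) * hs2
  have hkeyA : A₂ = a₀ * A₁ := by
    rw [hA₂, hA₁]; linear_combination (c₁ ^ 2 * μ) * hk1
  have hkeyB : B₂ = a₀ * B₁ := by
    rw [hB₂, hB₁]; linear_combination (d₁ ^ 2 * μ⁻¹) * hk2
  have hA₁pos : (0 : ℝ) < A₁ := by rw [hA₁]; positivity
  have hB₁pos : (0 : ℝ) < B₁ := by
    rw [hB₁]; positivity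
  -- inverse identity
  have hinv : ∀ n : ℤ, (μ ^ (2 * n) * Real.exp (2 * η₁ * t))⁻¹
      = μ ^ (-(2 * n)) * Real.exp (-(2 * η₁ * t)) := by
    intro n
    rw [mul_inv, ← Real.exp_neg, zpow_neg]
  have h2T : Tendsto (fun n : ℤ => 2 * n) atTop atTop := by
    refine tendsto_atTop_atTop.2 fun b => ⟨max b 0, fun n hn => ?_⟩
    have h0 : (0 : ℤ) ≤ n := le_trans (le_max_right b 0) hn
    have hb : b ≤ n := le_trans (le_max_left b 0) hn
    omega
  have h2B : Tendsto (fun n : ℤ => -(2 * n)) atBot atTop := by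
    refine tendsto_atBot_atTop.2 fun b => ⟨-(max b 0), fun n hn => ?_⟩
    have h0 : n ≤ 0 := le_trans hn (by simp [le_max_right])
    have hb : n ≤ -b := le_trans hn (by simp [le_max_left])
    omega
  constructor
  · refine ⟨-a₀, ?_, by ring⟩
    have hx : Tendsto (fun n : ℤ => μ ^ (2 * n) * Real.exp (2 * η₁ * t)) atTop atTop :=
      ((my_tendsto_zpow_atTop_atTop hμ1).comp h2T).atTop_mul_const (Real.exp_pos _)
    refine limit_aux (B := B₂) (Cc := C₂) (B' := B₁) (C' := C₁) hβne hA₁pos.ne' hkeyA _ hx _ fun n => ?_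
    rw [hG n t, hF n t, hinv n]
    ring
  · refine ⟨-a₀, ?_, by ring⟩
    have hx : Tendsto (fun n : ℤ => μ ^ (-(2 * n)) * Real.exp (-(2 * η₁ * t))) atBot atTop :=
      ((my_tendsto_zpow_atTop_atTop hμ1).comp h2B).atTop_mul_const (Real.exp_pos _)
    refine limit_aux (B := A₂) (Cc := C₂) (B' := A₁) (C' := C₁) hβne hB₁pos.ne' hkeyB _ hx _ fun n => ?_
    have hinv' : (μ ^ (-(2 * n)) * Real.exp (-(2 * η₁ * t)))⁻¹
        = μ ^ (2 * n) * Real.exp (2 * η₁ * t) := by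
      rw [mul_inv, ← Real.exp_neg, zpow_neg, inv_inv, neg_neg]
    rw [hG n t, hF n t, hinv']
    ring
end

section
/- Let a₀ ∈ ℝ with 0 < a₀² < 1 and let k = iθ be purely imaginary with θ ∈ ℝ and sin²θ < a₀². Set s = √(4a₀² − 4sin²θ) ∈ ℝ (so that s² = (e^k − e^{−k})² + 4a₀²), μ = (e^k + e^{−k} + s)/(2√(1 − a₀²)), η = (1/2)(e^k + e^{−k})·s and ξ = (e^k − e^{−k} − s)/(2a₀). Then μ and η are real numbers and |ξ| = 1. -/
open Complex

/-- Section 5.2, first special case: for the defocusing reverse-space-time background,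
when `k = iθ` is purely imaginary with `sin²θ < a₀²` and `0 < a₀² < 1`, the dispersion
quantities `μ` and `η` are real and `|ξ| = 1`, so the first-order solution is a
soliton. -/
theorem defocusing_soliton_case (a₀ θ : ℝ)
    (ha₀ : 0 < a₀ ^ 2) (ha₀' : a₀ ^ 2 < 1)
    (hθ : Real.sin θ ^ 2 < a₀ ^ 2)
    (k s μ η ξ : ℂ)
    (hk : k = Complex.I * θ)
    (hs : s = (Real.sqrt (4 * a₀ ^ 2 - 4 * Real.sin θ ^ 2) : ℂ))
    (hμ : μ = (Complex.exp k + Complex.exp (-k) + s) /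
      (2 * (Real.sqrt (1 - a₀ ^ 2) : ℂ)))
    (hη : η = (1 / 2) * (Complex.exp k + Complex.exp (-k)) * s)
    (hξ : ξ = (Complex.exp k - Complex.exp (-k) - s) / (2 * (a₀ : ℂ))) :
    μ.im = 0 ∧ η.im = 0 ∧ ‖ξ‖ = 1 := by
  have hek : Complex.exp k = Real.cos θ + Real.sin θ * Complex.I := by
    rw [hk, mul_comm, Complex.exp_mul_I, Complex.ofReal_cos, Complex.ofReal_sin]
  have hek' : Complex.exp (-k) = Real.cos θ - Real.sin θ * Complex.I := by
    have : -k = (-θ : ℝ) * Complex.I := by rw [hk]; push_cast; ring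
    rw [this, Complex.exp_mul_I, Complex.ofReal_neg, Complex.cos_neg, Complex.sin_neg,
      Complex.ofReal_cos, Complex.ofReal_sin]
    ring
  have hsum : Complex.exp k + Complex.exp (-k) = ((2 * Real.cos θ : ℝ) : ℂ) := by
    rw [hek, hek']; push_cast; ring
  have hdiff : Complex.exp k - Complex.exp (-k) = (2 * Real.sin θ : ℝ) * Complex.I := by
    rw [hek, hek']; push_cast; ring
  refine ⟨?_, ?_, ?_⟩
  · have : μ = (((2 * Real.cos θ + Real.sqrt (4 * a₀ ^ 2 - 4 * Real.sin θ ^ 2)) /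
        (2 * Real.sqrt (1 - a₀ ^ 2)) : ℝ) : ℂ) := by
      rw [hμ, hsum, hs]; push_cast; ring
    rw [this, Complex.ofReal_im]
  · have : η = (((1 / 2) * (2 * Real.cos θ) *
        Real.sqrt (4 * a₀ ^ 2 - 4 * Real.sin θ ^ 2) : ℝ) : ℂ) := by
      rw [hη, hsum, hs]; push_cast; ring
    rw [this, Complex.ofReal_im]
  · have ha : a₀ ≠ 0 := by intro h; rw [h] at ha₀; simp at ha₀
    have hnn : (0:ℝ) ≤ 4 * a₀ ^ 2 - 4 * Real.sin θ ^ 2 := by nlinarith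
    have hsq : Real.sqrt (4 * a₀ ^ 2 - 4 * Real.sin θ ^ 2) ^ 2 =
        4 * a₀ ^ 2 - 4 * Real.sin θ ^ 2 := Real.sq_sqrt hnn
    have : ‖ξ‖ ^ 2 = 1 := by
      rw [hξ, hdiff, hs, norm_div, norm_mul]
      rw [div_pow, mul_pow]
      have h1 : ‖(2 * Real.sin θ : ℝ) * Complex.I -
          (Real.sqrt (4 * a₀ ^ 2 - 4 * Real.sin θ ^ 2) : ℂ)‖ ^ 2 =
          (2 * Real.sin θ) ^ 2 + Real.sqrt (4 * a₀ ^ 2 - 4 * Real.sin θ ^ 2) ^ 2 := by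
        rw [Complex.sq_norm, Complex.normSq_apply]
        simp [Complex.sub_re, Complex.sub_im, Complex.mul_im, Complex.mul_re, Complex.sin_ofReal_re]
        ring
      rw [h1, hsq]
      have h2 : ‖(2:ℂ)‖ = 2 := by norm_num
      rw [h2, Complex.norm_real, Real.norm_eq_abs, sq_abs]
      field_simp
      ring
    have habs : 0 ≤ ‖ξ‖ := norm_nonneg _
    nlinarith
end
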